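/- Let (X,Y) be jointly distributed random variables on [0,1]² and let P(k) denote the set of finite partitions of [0,1] into at most k intervals. Then MIC*(X,Y) = sup over all finite partitions P of the maximum of I(X, Y|_P)/log|P| and I(X|_P, Y)/log|P|, where |P| is the number of bins of P. -/

import Mathlib

open MeasureTheory Real Filter Topology
open scoped ENNReal

/-- Discrete mutual information of a joint distribution `μ` on `ℝ × ℝ` discretized by a grid
with row-quantizer `rowf` (on the y-axis, values below `k`) and column-quantizer `colf`
(on the x-axis, values below `l`): `I = H(rows) + H(cols) − H(cells)`. -/
noncomputable def gridMI (μ : Measure (ℝ × ℝ)) (k l : ℕ) (rowf colf : ℝ → ℕ) : ℝ :=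
    (∑ i ∈ Finset.range k, Real.negMulLog ((μ {z | rowf z.2 = i}).toReal))
  + (∑ j ∈ Finset.range l, Real.negMulLog ((μ {z | colf z.1 = j}).toReal))
  - ∑ i ∈ Finset.range k, ∑ j ∈ Finset.range l,
      Real.negMulLog ((μ {z | rowf z.2 = i ∧ colf z.1 = j}).toReal)

/-- A partition of the line into at most `k` intervals, encoded as a monotone cell-index map. -/
def IsIntervalPart (k : ℕ) (p : ℝ → ℕ) : Prop := Monotone p ∧ ∀ t, p t < k

/-- A finite measurable partition of the line into at most `k` cells. -/
def IsMeasPart (k : ℕ) (p : ℝ → ℕ) : Prop := Measurable p ∧ ∀ t, p t < k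

/-- `I*((X,Y),k,ℓ)`: the supremum of discrete mutual information over all `k`-row-by-`ℓ`-column
grids applied to the joint distribution `μ`. -/
noncomputable def IStar (μ : Measure (ℝ × ℝ)) (k l : ℕ) : ℝ :=
  ⨆ g : {g : (ℝ → ℕ) × (ℝ → ℕ) // IsIntervalPart k g.1 ∧ IsIntervalPart l g.2},
    gridMI μ k l g.1.1 g.1.2

/-- The `(k,ℓ)` entry of the population characteristic matrix. -/
noncomputable def charMatrix (μ : Measure (ℝ × ℝ)) (k l : ℕ) : ℝ :=
  IStar μ k l / Real.log (min k l)

/-- The population maximal information coefficient `MIC*`. -/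
noncomputable def MICStar (μ : Measure (ℝ × ℝ)) : ℝ :=
  ⨆ (k : {n : ℕ // 1 < n}) (l : {n : ℕ // 1 < n}), charMatrix μ k l

/-- `I(X, Y|_P)`: mutual information between `X` and the discretization of `Y` by the
partition `rowf` (into at most `k` cells), defined as the supremum of discrete mutual
informations over all finite measurable quantizations of `X`. -/
noncomputable def mixedMI_Y (μ : Measure (ℝ × ℝ)) (k : ℕ) (rowf : ℝ → ℕ) : ℝ :=
  ⨆ c : {c : ℕ × (ℝ → ℕ) // IsMeasPart c.1 c.2}, gridMI μ k c.1.1 rowf c.1.2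

/-- `I(X|_P, Y)`: mutual information between the discretization of `X` by the partition
`colf` (into at most `ℓ` cells) and `Y`. -/
noncomputable def mixedMI_X (μ : Measure (ℝ × ℝ)) (l : ℕ) (colf : ℝ → ℕ) : ℝ :=
  ⨆ r : {r : ℕ × (ℝ → ℕ) // IsMeasPart r.1 r.2}, gridMI μ r.1.1 l r.1.2 colf

/-- The mutual information of a joint distribution on `ℝ × ℝ` (possibly infinite), defined as
the supremum over all finite measurable quantizations of both coordinates of the discrete
mutual information. -/
noncomputable def mutualInfo (μ : Measure (ℝ × ℝ)) : ℝ≥0∞ :=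
  ⨆ g : {g : (ℕ × (ℝ → ℕ)) × (ℕ × (ℝ → ℕ)) //
      IsMeasPart g.1.1 g.1.2 ∧ IsMeasPart g.2.1 g.2.2},
    ENNReal.ofReal (gridMI μ g.1.1.1 g.1.2.1 g.1.1.2 g.1.2.2)



open scoped symmDiff

namespace MICAux



lemma nml_add_le {a b : ℝ} (ha : 0 ≤ a) (hb : 0 ≤ b) :
    Real.negMulLog (a + b) ≤ Real.negMulLog a + Real.negMulLog b := by
  rcases ha.eq_or_lt with h | h
  · simp [← h]
  rcases hb.eq_or_lt with h' | h'
  · simp [← h']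
  have h1 : Real.log a ≤ Real.log (a + b) := Real.log_le_log h (by linarith)
  have h2 : Real.log b ≤ Real.log (a + b) := Real.log_le_log h' (by linarith)
  simp only [Real.negMulLog, neg_mul]
  nlinarith [mul_le_mul_of_nonneg_left h1 ha, mul_le_mul_of_nonneg_left h2 hb]

lemma nml_sum_le {ι : Type*} (s : Finset ι) (v : ι → ℝ) (hv : ∀ i ∈ s, 0 ≤ v i) :
    Real.negMulLog (∑ i ∈ s, v i) ≤ ∑ i ∈ s, Real.negMulLog (v i) := by
  induction s using Finset.cons_induction with
  | empty => simp
  | cons a s ha ih =>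
    rw [Finset.sum_cons, Finset.sum_cons]
    calc Real.negMulLog (v a + ∑ i ∈ s, v i)
        ≤ Real.negMulLog (v a) + Real.negMulLog (∑ i ∈ s, v i) :=
          nml_add_le (hv a (Finset.mem_cons_self _ _))
            (Finset.sum_nonneg fun i hi => hv i (Finset.mem_cons_of_mem hi))
      _ ≤ _ := add_le_add_right (ih fun i hi => hv i (Finset.mem_cons_of_mem hi)) _

lemma logsum {ι : Type*} (s : Finset ι) (a c : ι → ℝ) (ha : ∀ i ∈ s, 0 ≤ a i)
    (hac : ∀ i ∈ s, a i ≤ c i) :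
    (∑ i ∈ s, a i) * Real.log ((∑ i ∈ s, a i) / (∑ i ∈ s, c i)) ≤
      ∑ i ∈ s, a i * Real.log (a i / c i) := by
  set A := ∑ i ∈ s, a i with hA_def
  set C := ∑ i ∈ s, c i with hC_def
  have hA : 0 ≤ A := Finset.sum_nonneg ha
  have hc0 : ∀ i ∈ s, 0 ≤ c i := fun i hi => (ha i hi).trans (hac i hi)
  have hC : 0 ≤ C := Finset.sum_nonneg hc0
  rcases hC.eq_or_lt with hC0 | hC0
  · have hcz : ∀ i ∈ s, c i = 0 :=
      (Finset.sum_eq_zero_iff_of_nonneg hc0).mp hC0.symm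
    have haz : ∀ i ∈ s, a i = 0 := fun i hi =>
      le_antisymm ((hac i hi).trans (hcz i hi).le) (ha i hi)
    have : A = 0 := Finset.sum_eq_zero haz
    rw [this, zero_mul]
    exact Finset.sum_nonneg fun i hi => by rw [haz i hi]; simp
  · have key : ∀ i ∈ s, a i * Real.log (A / C) + a i - c i * (A / C) ≤
        a i * Real.log (a i / c i) := by
      intro i hi
      rcases (ha i hi).eq_or_lt with h0 | h0
      · rw [← h0]
        simp only [zero_mul, zero_add, mul_zero]
        have : 0 ≤ c i * (A / C) := mul_nonneg (hc0 i hi) (div_nonneg hA hC0.le)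
        linarith
      · have hci : 0 < c i := lt_of_lt_of_le h0 (hac i hi)
        have hApos : 0 < A := lt_of_lt_of_le h0 (Finset.single_le_sum ha hi)
        have ht : (0:ℝ) < (c i * A) / (a i * C) := by positivity
        have hlog := Real.log_le_sub_one_of_pos ht
        have hexp : Real.log ((c i * A) / (a i * C)) =
            Real.log (c i) + Real.log A - Real.log (a i) - Real.log C := by
          rw [Real.log_div (by positivity) (by positivity),
            Real.log_mul hci.ne' hApos.ne', Real.log_mul h0.ne' hC0.ne']
          ring
        have hval : a i * ((c i * A) / (a i * C)) = c i * (A / C) := by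
          field_simp
        have := mul_le_mul_of_nonneg_left hlog h0.le
        rw [hexp] at this
        rw [Real.log_div hApos.ne' hC0.ne', Real.log_div h0.ne' hci.ne']
        nlinarith [this]
    calc A * Real.log (A / C)
        = ∑ i ∈ s, (a i * Real.log (A / C) + a i - c i * (A / C)) := by
          rw [Finset.sum_sub_distrib, Finset.sum_add_distrib, ← Finset.sum_mul,
            ← Finset.sum_mul, ← hA_def, ← hC_def]
          have : C * (A / C) = A := by field_simp
          linarith [this]
      _ ≤ ∑ i ∈ s, a i * Real.log (a i / c i) := Finset.sum_le_sum key

noncomputable def Psi (k : ℕ) (v : ℕ → ℝ) : ℝ :=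
  (∑ i ∈ Finset.range k, Real.negMulLog (v i)) -
    Real.negMulLog (∑ i ∈ Finset.range k, v i)

lemma Psi_nonneg {k : ℕ} {v : ℕ → ℝ} (hv : ∀ i ∈ Finset.range k, 0 ≤ v i) :
    0 ≤ Psi k v := sub_nonneg.2 (nml_sum_le _ _ hv)

lemma G_eq {x y : ℝ} (hx : 0 ≤ x) (hy : 0 ≤ y) :
    Real.negMulLog x + Real.negMulLog y - Real.negMulLog (x + y) =
      -(x * Real.log (x / (x + y)) + y * Real.log (y / (x + y))) := by
  rcases hx.eq_or_lt with h0 | h0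
  · rcases hy.eq_or_lt with h1 | h1
    · simp [← h0, ← h1]
    · simp [← h0, div_self h1.ne']
  · rcases hy.eq_or_lt with h1 | h1
    · simp [← h1, div_self h0.ne']
    · have hxy : (0:ℝ) < x + y := by linarith
      rw [Real.log_div h0.ne' hxy.ne', Real.log_div h1.ne' hxy.ne']
      simp only [Real.negMulLog]
      ring

lemma Psi_superadd {k : ℕ} (a b : ℕ → ℝ) (ha : ∀ i ∈ Finset.range k, 0 ≤ a i)
    (hb : ∀ i ∈ Finset.range k, 0 ≤ b i) :
    Psi k a + Psi k b ≤ Psi k (fun i => a i + b i) := by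
  set A := ∑ i ∈ Finset.range k, a i with hA_def
  set B := ∑ i ∈ Finset.range k, b i with hB_def
  have hA : 0 ≤ A := Finset.sum_nonneg ha
  have hB : 0 ≤ B := Finset.sum_nonneg hb
  have h1 := logsum (Finset.range k) a (fun i => a i + b i) ha
    (fun i hi => le_add_of_nonneg_right (hb i hi))
  have h2 := logsum (Finset.range k) b (fun i => a i + b i) hb
    (fun i hi => le_add_of_nonneg_left (ha i hi))
  rw [Finset.sum_add_distrib, ← hA_def, ← hB_def] at h1 h2
  have hsum : ∑ i ∈ Finset.range k, (fun i => a i + b i) i = A + B := by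
    rw [Finset.sum_add_distrib]
  have hGpt : ∀ i ∈ Finset.range k,
      Real.negMulLog (a i) + Real.negMulLog (b i) - Real.negMulLog (a i + b i) =
        -(a i * Real.log (a i / (a i + b i)) + b i * Real.log (b i / (a i + b i))) :=
    fun i hi => G_eq (ha i hi) (hb i hi)
  have hGt := G_eq hA hB
  have expand : Psi k (fun i => a i + b i) - Psi k a - Psi k b =
      (Real.negMulLog A + Real.negMulLog B - Real.negMulLog (A + B)) -
        ∑ i ∈ Finset.range k,
          (Real.negMulLog (a i) + Real.negMulLog (b i) - Real.negMulLog (a i + b i)) := by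
    simp only [Psi, hsum]
    rw [Finset.sum_sub_distrib, Finset.sum_add_distrib, ← hA_def, ← hB_def]
    ring
  rw [Finset.sum_congr rfl hGpt, hGt] at expand
  have hsum_split : ∑ i ∈ Finset.range k,
      -(a i * Real.log (a i / (a i + b i)) + b i * Real.log (b i / (a i + b i))) =
      -((∑ i ∈ Finset.range k, a i * Real.log (a i / (a i + b i))) +
        ∑ i ∈ Finset.range k, b i * Real.log (b i / (a i + b i))) := by
    rw [← Finset.sum_add_distrib, ← Finset.sum_neg_distrib]
  rw [hsum_split] at expand
  linarith [h1, h2, expand]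

lemma Psi_sum {ι : Type*} {k : ℕ} (s : Finset ι) (v : ι → ℕ → ℝ)
    (hv : ∀ j ∈ s, ∀ i ∈ Finset.range k, 0 ≤ v j i) :
    ∑ j ∈ s, Psi k (v j) ≤ Psi k (fun i => ∑ j ∈ s, v j i) := by
  induction s using Finset.cons_induction with
  | empty => simp [Psi]
  | cons a s ha ih =>
    rw [Finset.sum_cons]
    have hrest : ∀ i ∈ Finset.range k, 0 ≤ ∑ j ∈ s, v j i := fun i hi =>
      Finset.sum_nonneg fun j hj => hv j (Finset.mem_cons_of_mem hj) i hi
    calc Psi k (v a) + ∑ j ∈ s, Psi k (v j)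
        ≤ Psi k (v a) + Psi k (fun i => ∑ j ∈ s, v j i) :=
          add_le_add_right (ih fun j hj => hv j (Finset.mem_cons_of_mem hj)) _
      _ ≤ Psi k (fun i => v a i + ∑ j ∈ s, v j i) :=
          Psi_superadd _ _ (fun i hi => hv a (Finset.mem_cons_self _ _) i hi) hrest
      _ = Psi k (fun i => ∑ j ∈ Finset.cons a s ha, v j i) := by
          simp [Finset.sum_cons]

lemma sum_nml_le_log {k : ℕ} (hk : 1 ≤ k) (p : ℕ → ℝ)
    (hp : ∀ i ∈ Finset.range k, 0 ≤ p i) (hsum : ∑ i ∈ Finset.range k, p i = 1) :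
    ∑ i ∈ Finset.range k, Real.negMulLog (p i) ≤ Real.log k := by
  have hkR : (0:ℝ) < k := by exact_mod_cast hk
  have key : ∀ i ∈ Finset.range k,
      Real.negMulLog (p i) ≤ p i * Real.log k + (1 / k - p i) := by
    intro i hi
    rcases (hp i hi).eq_or_lt with h0 | h0
    · rw [← h0]
      simp only [Real.negMulLog_zero, zero_mul, zero_add, sub_zero]
      positivity
    · have ht : (0:ℝ) < 1 / (k * p i) := by positivity
      have hlog := Real.log_le_sub_one_of_pos ht
      have hexp : Real.log (1 / ((k:ℝ) * p i)) = -(Real.log k + Real.log (p i)) := by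
        rw [one_div, Real.log_inv, Real.log_mul hkR.ne' h0.ne']
      rw [hexp] at hlog
      have := mul_le_mul_of_nonneg_left hlog h0.le
      have hval : p i * (1 / ((k:ℝ) * p i) - 1) = 1 / k - p i := by
        field_simp
      rw [Real.negMulLog]
      nlinarith [this]
  calc ∑ i ∈ Finset.range k, Real.negMulLog (p i)
      ≤ ∑ i ∈ Finset.range k, (p i * Real.log k + (1 / k - p i)) :=
        Finset.sum_le_sum key
    _ = Real.log k := by
      rw [Finset.sum_add_distrib, ← Finset.sum_mul, hsum, one_mul,
        Finset.sum_sub_distrib, hsum, Finset.sum_const, Finset.card_range]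
      simp only [nsmul_eq_mul]
      rw [mul_one_div, div_self hkR.ne']
      ring


variable {μ : Measure (ℝ × ℝ)} [IsProbabilityMeasure μ] {k l L : ℕ} {rowf colf : ℝ → ℕ}

lemma part_sum (μ : Measure (ℝ × ℝ)) [IsProbabilityMeasure μ] {k : ℕ} (g : ℝ × ℝ → ℕ)
    (hg : Measurable g) (hgk : ∀ z, g z < k) {S : Set (ℝ × ℝ)} (hS : MeasurableSet S) :
    ∑ i ∈ Finset.range k, (μ ({z | g z = i} ∩ S)).toReal = (μ S).toReal := by
  have hcover : ⋃ i ∈ Finset.range k, ({z | g z = i} ∩ S) = S := by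
    ext z
    simp only [Set.mem_iUnion, Finset.mem_range, Set.mem_inter_iff, Set.mem_setOf_eq]
    exact ⟨fun ⟨i, _, _, hz⟩ => hz, fun hz => ⟨g z, hgk z, rfl, hz⟩⟩
  have hdisj : (↑(Finset.range k) : Set ℕ).PairwiseDisjoint
      (fun i => {z | g z = i} ∩ S) := by
    intro i _ j _ hij
    apply Set.disjoint_left.mpr
    rintro z ⟨hz1, -⟩ ⟨hz2, -⟩
    exact hij (hz1.symm.trans hz2)
  have hmeas : ∀ i ∈ Finset.range k, MeasurableSet ({z | g z = i} ∩ S) := fun i _ =>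
    (hg (measurableSet_singleton i)).inter hS
  have hb := measure_biUnion_finset (μ := μ) hdisj hmeas
  rw [hcover] at hb
  rw [← ENNReal.toReal_sum fun i _ => measure_ne_top μ _, ← hb]

lemma gridMI_eq_rowPsi (μ : Measure (ℝ × ℝ)) [IsProbabilityMeasure μ]
    (hrow : Measurable rowf) (hrk : ∀ t, rowf t < k) (hcol : Measurable colf) :
    gridMI μ k l rowf colf =
      (∑ i ∈ Finset.range k, Real.negMulLog ((μ {z | rowf z.2 = i}).toReal)) -
        ∑ j ∈ Finset.range l,
          Psi k (fun i => (μ {z | rowf z.2 = i ∧ colf z.1 = j}).toReal) := by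
  have hmarg : ∀ j : ℕ, (μ {z | colf z.1 = j}).toReal =
      ∑ i ∈ Finset.range k, (μ {z | rowf z.2 = i ∧ colf z.1 = j}).toReal := by
    intro j
    rw [← part_sum μ (fun z => rowf z.2) (hrow.comp measurable_snd) (fun z => hrk z.2)
      (show MeasurableSet {z : ℝ × ℝ | colf z.1 = j} from
        (hcol.comp measurable_fst) (measurableSet_singleton j))]
    refine Finset.sum_congr rfl fun i _ => rfl
  simp only [gridMI, Psi]
  rw [Finset.sum_comm, Finset.sum_sub_distrib,
    Finset.sum_congr rfl fun j (_ : j ∈ Finset.range l) => congrArg Real.negMulLog (hmarg j)]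
  ring

lemma gridMI_le_log_row (μ : Measure (ℝ × ℝ)) [IsProbabilityMeasure μ]
    (hrow : Measurable rowf) (hrk : ∀ t, rowf t < k) (hcol : Measurable colf) :
    gridMI μ k l rowf colf ≤ Real.log k := by
  have hk1 : 1 ≤ k := lt_of_le_of_lt (Nat.zero_le _) (hrk 0)
  rw [gridMI_eq_rowPsi μ hrow hrk hcol]
  have hsum1 : ∑ i ∈ Finset.range k, (μ {z | rowf z.2 = i}).toReal = 1 := by
    have := part_sum μ (fun z => rowf z.2) (hrow.comp measurable_snd) (fun z => hrk z.2)
      MeasurableSet.univ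
    simpa [measure_univ] using this
  have h1 := sum_nml_le_log hk1 (fun i => (μ {z | rowf z.2 = i}).toReal)
    (fun i _ => ENNReal.toReal_nonneg) hsum1
  have h2 : 0 ≤ ∑ j ∈ Finset.range l,
      Psi k (fun i => (μ {z | rowf z.2 = i ∧ colf z.1 = j}).toReal) :=
    Finset.sum_nonneg fun j _ => Psi_nonneg fun i _ => ENNReal.toReal_nonneg
  linarith

lemma gridMI_swap (μ : Measure (ℝ × ℝ)) (hrow : Measurable rowf) (hcol : Measurable colf) :
    gridMI (μ.map Prod.swap) l k colf rowf = gridMI μ k l rowf colf := by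
  have hsw : Measurable (Prod.swap : ℝ × ℝ → ℝ × ℝ) := measurable_swap
  have h1 : ∀ i, (μ.map Prod.swap) {z : ℝ × ℝ | colf z.2 = i} = μ {z | colf z.1 = i} := by
    intro i
    rw [Measure.map_apply hsw (show MeasurableSet {z : ℝ × ℝ | colf z.2 = i} from
      (hcol.comp measurable_snd) (measurableSet_singleton i))]
    rfl
  have h2 : ∀ i, (μ.map Prod.swap) {z : ℝ × ℝ | rowf z.1 = i} = μ {z | rowf z.2 = i} := by
    intro i
    rw [Measure.map_apply hsw (show MeasurableSet {z : ℝ × ℝ | rowf z.1 = i} from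
      (hrow.comp measurable_fst) (measurableSet_singleton i))]
    rfl
  have h3 : ∀ i j, (μ.map Prod.swap) {z : ℝ × ℝ | colf z.2 = i ∧ rowf z.1 = j} =
      μ {z | rowf z.2 = j ∧ colf z.1 = i} := by
    intro i j
    have hm : MeasurableSet {z : ℝ × ℝ | colf z.2 = i ∧ rowf z.1 = j} := by
      rw [Set.setOf_and]
      exact ((hcol.comp measurable_snd) (measurableSet_singleton i)).inter
        ((hrow.comp measurable_fst) (measurableSet_singleton j))
    rw [Measure.map_apply hsw hm]
    congr 1
    ext z
    simp only [Set.mem_preimage, Set.mem_setOf_eq, Prod.fst_swap, Prod.snd_swap, and_comm]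
  simp only [gridMI, h1, h2, h3]
  rw [Finset.sum_comm]
  ring

lemma gridMI_le_log_col (μ : Measure (ℝ × ℝ)) [IsProbabilityMeasure μ]
    (hrow : Measurable rowf) (hcol : Measurable colf) (hcl : ∀ t, colf t < l) :
    gridMI μ k l rowf colf ≤ Real.log l := by
  haveI : IsProbabilityMeasure (μ.map Prod.swap) :=
    Measure.isProbabilityMeasure_map measurable_swap.aemeasurable
  rw [← gridMI_swap μ hrow hcol]
  exact gridMI_le_log_row _ hcol hcl hrow

lemma gridMI_pad (μ : Measure (ℝ × ℝ)) (hcl : ∀ t, colf t < l) (hlL : l ≤ L) :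
    gridMI μ k L rowf colf = gridMI μ k l rowf colf := by
  have hemp : ∀ j, j ∈ Finset.range L → j ∉ Finset.range l →
      {z : ℝ × ℝ | colf z.1 = j} = ∅ := by
    intro j _ hj
    rw [Finset.mem_range, not_lt] at hj
    ext z
    simp only [Set.mem_setOf_eq, Set.mem_empty_iff_false, iff_false]
    intro h
    exact absurd (h ▸ hcl z.1) (not_lt.2 hj)
  have e1 : ∑ j ∈ Finset.range L, Real.negMulLog ((μ {z | colf z.1 = j}).toReal) =
      ∑ j ∈ Finset.range l, Real.negMulLog ((μ {z | colf z.1 = j}).toReal) :=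
    (Finset.sum_subset (Finset.range_subset_range.mpr hlL)
      (fun j hj hj' => by rw [hemp j hj hj']; simp)).symm
  have e2 : ∀ i : ℕ, ∑ j ∈ Finset.range L,
        Real.negMulLog ((μ {z | rowf z.2 = i ∧ colf z.1 = j}).toReal) =
      ∑ j ∈ Finset.range l,
        Real.negMulLog ((μ {z | rowf z.2 = i ∧ colf z.1 = j}).toReal) := by
    intro i
    refine (Finset.sum_subset (Finset.range_subset_range.mpr hlL) fun j hj hj' => ?_).symm
    have : {z : ℝ × ℝ | rowf z.2 = i ∧ colf z.1 = j} = ∅ := by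
      have := hemp j hj hj'
      ext z
      simp only [Set.mem_setOf_eq, Set.mem_empty_iff_false, iff_false]
      rintro ⟨-, h2⟩
      exact absurd (Set.mem_setOf_eq ▸ h2 : z ∈ {z : ℝ × ℝ | colf z.1 = j}) (this ▸ Set.notMem_empty z)
    rw [this]
    simp
  simp only [gridMI, e1, Finset.sum_congr rfl fun i (_ : i ∈ Finset.range k) => e2 i]

lemma gridMI_merge (μ : Measure (ℝ × ℝ)) [IsProbabilityMeasure μ] {l l' : ℕ}
    {colf' : ℝ → ℕ} (hrow : Measurable rowf) (hrk : ∀ t, rowf t < k)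
    (hcol' : Measurable colf') (hcl' : ∀ t, colf' t < l') (σ : ℕ → ℕ) (hσ : ∀ j', σ j' < l) :
    gridMI μ k l rowf (fun x => σ (colf' x)) ≤ gridMI μ k l' rowf colf' := by
  rw [gridMI_eq_rowPsi (colf := fun x => σ (colf' x)) μ hrow hrk
      (by exact measurable_from_top.comp hcol'),
    gridMI_eq_rowPsi μ hrow hrk hcol']
  apply sub_le_sub_left
  have hfib : ∀ i j, (μ {z | rowf z.2 = i ∧ σ (colf' z.1) = j}).toReal =
      ∑ j' ∈ (Finset.range l').filter (fun j' => σ j' = j),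
        (μ {z | rowf z.2 = i ∧ colf' z.1 = j'}).toReal := by
    intro i j
    have hcover : ⋃ j' ∈ (Finset.range l').filter (fun j' => σ j' = j),
        {z : ℝ × ℝ | rowf z.2 = i ∧ colf' z.1 = j'} =
        {z | rowf z.2 = i ∧ σ (colf' z.1) = j} := by
      ext z
      simp only [Set.mem_iUnion, Finset.mem_filter, Finset.mem_range, Set.mem_setOf_eq]
      constructor
      · rintro ⟨j', ⟨-, hσj'⟩, hr, hc⟩
        exact ⟨hr, by rw [hc, hσj']⟩
      · rintro ⟨hr, hc⟩
        exact ⟨colf' z.1, ⟨hcl' z.1, hc⟩, hr, rfl⟩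
    have hdisj : (↑((Finset.range l').filter (fun j' => σ j' = j)) : Set ℕ).PairwiseDisjoint
        (fun j' => {z : ℝ × ℝ | rowf z.2 = i ∧ colf' z.1 = j'}) := by
      intro a _ b _ hab
      apply Set.disjoint_left.mpr
      rintro z ⟨-, hz1⟩ ⟨-, hz2⟩
      exact hab (hz1.symm.trans hz2)
    have hmeas : ∀ j' ∈ (Finset.range l').filter (fun j' => σ j' = j),
        MeasurableSet {z : ℝ × ℝ | rowf z.2 = i ∧ colf' z.1 = j'} := by
      intro j' _
      rw [Set.setOf_and]
      exact ((hrow.comp measurable_snd) (measurableSet_singleton i)).inter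
        ((hcol'.comp measurable_fst) (measurableSet_singleton j'))
    have hb := measure_biUnion_finset (μ := μ) hdisj hmeas
    rw [hcover] at hb
    rw [hb, ENNReal.toReal_sum fun j' _ => measure_ne_top μ _]
  calc ∑ j' ∈ Finset.range l',
        Psi k (fun i => (μ {z | rowf z.2 = i ∧ colf' z.1 = j'}).toReal)
      = ∑ j ∈ Finset.range l, ∑ j' ∈ (Finset.range l').filter (fun j' => σ j' = j),
          Psi k (fun i => (μ {z | rowf z.2 = i ∧ colf' z.1 = j'}).toReal) :=
        (Finset.sum_fiberwise_of_maps_to (fun j' _ => Finset.mem_range.2 (hσ j')) _).symm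
    _ ≤ ∑ j ∈ Finset.range l,
          Psi k (fun i => (μ {z | rowf z.2 = i ∧ σ (colf' z.1) = j}).toReal) := by
        refine Finset.sum_le_sum fun j _ => ?_
        calc ∑ j' ∈ (Finset.range l').filter (fun j' => σ j' = j),
              Psi k (fun i => (μ {z | rowf z.2 = i ∧ colf' z.1 = j'}).toReal)
            ≤ Psi k (fun i => ∑ j' ∈ (Finset.range l').filter (fun j' => σ j' = j),
                (μ {z | rowf z.2 = i ∧ colf' z.1 = j'}).toReal) :=
              Psi_sum _ _ (fun j' _ i _ => ENNReal.toReal_nonneg)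
          _ = Psi k (fun i => (μ {z | rowf z.2 = i ∧ σ (colf' z.1) = j}).toReal) := by
              congr 1
              funext i
              exact (hfib i j).symm

lemma gridMI_one_col (μ : Measure (ℝ × ℝ)) [IsProbabilityMeasure μ]
    (hrow : Measurable rowf) (hrk : ∀ t, rowf t < k) :
    gridMI μ k 1 rowf (fun _ => 0) = 0 := by
  rw [gridMI_eq_rowPsi μ hrow hrk measurable_const, Finset.sum_range_one]
  have hs2 : (fun i => (μ {z | rowf z.2 = i ∧ (fun _ : ℝ => (0:ℕ)) z.1 = 0}).toReal)
      = fun i => (μ {z | rowf z.2 = i}).toReal := by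
    funext i
    have : {z : ℝ × ℝ | rowf z.2 = i ∧ (fun _ : ℝ => (0:ℕ)) z.1 = 0} = {z | rowf z.2 = i} := by
      ext z; simp
    rw [this]
  rw [hs2]
  have hsum1 : ∑ i ∈ Finset.range k, (μ {z | rowf z.2 = i}).toReal = 1 := by
    have := part_sum μ (fun z => rowf z.2) (hrow.comp measurable_snd) (fun z => hrk z.2)
      MeasurableSet.univ
    simpa [measure_univ] using this
  simp only [Psi]
  rw [hsum1]
  simp

lemma gridMI_const_const (μ : Measure (ℝ × ℝ)) [IsProbabilityMeasure μ] (hk : 1 ≤ k)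
    (hl : 1 ≤ l) : gridMI μ k l (fun _ => 0) (fun _ => 0) = 0 := by
  have hset : ∀ i : ℕ, {z : ℝ × ℝ | (fun _ : ℝ => (0:ℕ)) z.2 = i} =
      if i = 0 then Set.univ else ∅ := by
    intro i
    by_cases h : i = 0 <;> simp [h, eq_comm]
  have hone : ∀ i : ℕ, Real.negMulLog ((μ (if i = 0 then Set.univ else ∅)).toReal) = 0 := by
    intro i
    by_cases h : i = 0 <;> simp [h, measure_univ]
  simp only [gridMI]
  have e1 : ∑ i ∈ Finset.range k,
      Real.negMulLog ((μ {z : ℝ × ℝ | (fun _ : ℝ => (0:ℕ)) z.2 = i}).toReal) = 0 :=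
    Finset.sum_eq_zero fun i _ => by rw [hset i]; exact hone i
  have e2 : ∑ j ∈ Finset.range l,
      Real.negMulLog ((μ {z : ℝ × ℝ | (fun _ : ℝ => (0:ℕ)) z.1 = j}).toReal) = 0 := by
    refine Finset.sum_eq_zero fun j _ => ?_
    by_cases h : j = 0 <;> simp [h, eq_comm, measure_univ]
  have e3 : ∑ i ∈ Finset.range k, ∑ j ∈ Finset.range l, Real.negMulLog
      ((μ {z : ℝ × ℝ | (fun _ : ℝ => (0:ℕ)) z.2 = i ∧ (fun _ : ℝ => (0:ℕ)) z.1 = j}).toReal)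
      = 0 := by
    refine Finset.sum_eq_zero fun i _ => Finset.sum_eq_zero fun j _ => ?_
    by_cases hi : i = 0 <;> by_cases hj : j = 0 <;> simp [hi, hj, eq_comm, measure_univ]
  rw [e1, e2, e3]
  ring


end MICAux
namespace MICAux

variable (μ : Measure (ℝ × ℝ)) [IsProbabilityMeasure μ] {k l : ℕ} {rowf colf : ℝ → ℕ}

lemma IStar_bddAbove (k l : ℕ) :
    BddAbove (Set.range fun g : {g : (ℝ → ℕ) × (ℝ → ℕ) //
      IsIntervalPart k g.1 ∧ IsIntervalPart l g.2} => gridMI μ k l g.1.1 g.1.2) := by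
  refine ⟨Real.log k, ?_⟩
  rintro x ⟨g, rfl⟩
  exact gridMI_le_log_row μ g.2.1.1.measurable g.2.1.2 g.2.2.1.measurable

lemma IStar_nonneg (hk : 1 ≤ k) (hl : 1 ≤ l) : 0 ≤ IStar μ k l := by
  have h := le_ciSup (IStar_bddAbove μ k l)
    ⟨((fun _ => 0), (fun _ => 0)), ⟨monotone_const, fun _ => hk⟩, ⟨monotone_const, fun _ => hl⟩⟩
  rw [IStar]
  calc (0:ℝ) = gridMI μ k l (fun _ => 0) (fun _ => 0) := (gridMI_const_const μ hk hl).symm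
    _ ≤ _ := h

lemma IStar_le_log_min (hk : 1 ≤ k) (hl : 1 ≤ l) :
    IStar μ k l ≤ Real.log (min (k : ℝ) (l : ℝ)) := by
  have h1k : (1:ℝ) ≤ (k:ℝ) := by exact_mod_cast hk
  have h1l : (1:ℝ) ≤ (l:ℝ) := by exact_mod_cast hl
  refine Real.iSup_le ?_ (Real.log_nonneg (le_min h1k h1l))
  rintro ⟨g, hg1, hg2⟩
  rcases le_total k l with h | h
  · rw [min_eq_left (by exact_mod_cast h : (k:ℝ) ≤ l)]
    exact gridMI_le_log_row μ hg1.1.measurable hg1.2 hg2.1.measurable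
  · rw [min_eq_right (by exact_mod_cast h : (l:ℝ) ≤ k)]
    exact gridMI_le_log_col μ hg1.1.measurable hg2.1.measurable hg2.2

lemma charMatrix_nonneg (hk : 1 < k) (hl : 1 < l) : 0 ≤ charMatrix μ k l :=
  div_nonneg (IStar_nonneg μ hk.le hl.le)
    (Real.log_nonneg (le_min (by exact_mod_cast hk.le) (by exact_mod_cast hl.le)))

lemma charMatrix_le_one (hk : 1 < k) (hl : 1 < l) : charMatrix μ k l ≤ 1 := by
  rw [charMatrix, div_le_one (Real.log_pos
    (lt_min (by exact_mod_cast hk) (by exact_mod_cast hl)))]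
  exact IStar_le_log_min μ hk.le hl.le

lemma le_MICStar (hk : 1 < k) (hl : 1 < l) : charMatrix μ k l ≤ MICStar μ := by
  have bdd1 : BddAbove (Set.range fun l' : {n : ℕ // 1 < n} => charMatrix μ k l') := by
    refine ⟨1, ?_⟩
    rintro x ⟨l', rfl⟩
    exact charMatrix_le_one μ hk l'.2
  have h1 : charMatrix μ k l ≤ ⨆ l' : {n : ℕ // 1 < n}, charMatrix μ k (l' : ℕ) :=
    le_ciSup bdd1 ⟨l, hl⟩
  have bdd2 : BddAbove (Set.range fun k' : {n : ℕ // 1 < n} =>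
      ⨆ l' : {n : ℕ // 1 < n}, charMatrix μ (k' : ℕ) (l' : ℕ)) := by
    refine ⟨1, ?_⟩
    rintro x ⟨k', rfl⟩
    exact Real.iSup_le (fun l' => charMatrix_le_one μ k'.2 l'.2) zero_le_one
  exact h1.trans (le_ciSup bdd2 ⟨k, hk⟩)

lemma MICStar_nonneg : 0 ≤ MICStar μ :=
  le_trans (charMatrix_nonneg μ (k := 2) (l := 2) one_lt_two one_lt_two)
    (le_MICStar μ one_lt_two one_lt_two)

lemma mixedY_bddAbove (hrow : Measurable rowf) (hrk : ∀ t, rowf t < k) :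
    BddAbove (Set.range fun c : {c : ℕ × (ℝ → ℕ) // IsMeasPart c.1 c.2} =>
      gridMI μ k c.1.1 rowf c.1.2) := by
  refine ⟨Real.log k, ?_⟩
  rintro x ⟨c, rfl⟩
  exact gridMI_le_log_row μ hrow hrk c.2.1

lemma mixedY_le_log (hrow : Measurable rowf) (hrk : ∀ t, rowf t < k) :
    mixedMI_Y μ k rowf ≤ Real.log k := by
  have hk1 : 1 ≤ k := lt_of_le_of_lt (Nat.zero_le _) (hrk 0)
  exact Real.iSup_le (fun c => gridMI_le_log_row μ hrow hrk c.2.1)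
    (Real.log_nonneg (by exact_mod_cast hk1))

lemma mixedX_bddAbove (hcol : Measurable colf) (hcl : ∀ t, colf t < l) :
    BddAbove (Set.range fun r : {r : ℕ × (ℝ → ℕ) // IsMeasPart r.1 r.2} =>
      gridMI μ r.1.1 l r.1.2 colf) := by
  refine ⟨Real.log l, ?_⟩
  rintro x ⟨r, rfl⟩
  exact gridMI_le_log_col μ r.2.1 hcol hcl

lemma mixedX_le_log (hcol : Measurable colf) (hcl : ∀ t, colf t < l) :
    mixedMI_X μ l colf ≤ Real.log l := by
  have hl1 : 1 ≤ l := lt_of_le_of_lt (Nat.zero_le _) (hcl 0)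
  exact Real.iSup_le (fun r => gridMI_le_log_col μ r.2.1 hcol hcl)
    (Real.log_nonneg (by exact_mod_cast hl1))

lemma mixedY_nonneg (hrow : Measurable rowf) (hrk : ∀ t, rowf t < k) :
    0 ≤ mixedMI_Y μ k rowf := by
  have h := le_ciSup (mixedY_bddAbove μ hrow hrk)
    ⟨(1, fun _ => 0), measurable_const, fun _ => one_pos⟩
  rw [mixedMI_Y]
  calc (0:ℝ) = gridMI μ k 1 rowf (fun _ => 0) := (gridMI_one_col μ hrow hrk).symm
    _ ≤ _ := h

lemma mixedX_eq_swap (hcol : Measurable colf) :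
    mixedMI_X μ l colf = mixedMI_Y (μ.map Prod.swap) l colf := by
  unfold mixedMI_X mixedMI_Y
  exact iSup_congr fun r => (gridMI_swap μ r.2.1 hcol).symm

lemma IStar_swap (hk : 1 ≤ k) (hl : 1 ≤ l) :
    IStar (μ.map Prod.swap) k l = IStar μ l k := by
  haveI : IsProbabilityMeasure (μ.map Prod.swap) :=
    Measure.isProbabilityMeasure_map measurable_swap.aemeasurable
  apply le_antisymm
  · refine Real.iSup_le ?_ (IStar_nonneg μ hl hk)
    rintro ⟨⟨r, c⟩, hr, hc⟩
    have he : gridMI (μ.map Prod.swap) k l r c = gridMI μ l k c r :=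
      gridMI_swap μ hc.1.measurable hr.1.measurable
    rw [he]
    exact le_ciSup (IStar_bddAbove μ l k) ⟨(c, r), hc, hr⟩
  · refine Real.iSup_le ?_ (IStar_nonneg (μ.map Prod.swap) hk hl)
    rintro ⟨⟨c, r⟩, hc, hr⟩
    have he : gridMI μ l k c r = gridMI (μ.map Prod.swap) k l r c :=
      (gridMI_swap (k := l) (l := k) (rowf := c) (colf := r) μ
        hc.1.measurable hr.1.measurable).symm
    rw [he]
    exact le_ciSup (IStar_bddAbove (μ.map Prod.swap) k l) ⟨(r, c), hr, hc⟩

lemma MICStar_swap_le : MICStar (μ.map Prod.swap) ≤ MICStar μ := by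
  haveI : IsProbabilityMeasure (μ.map Prod.swap) :=
    Measure.isProbabilityMeasure_map measurable_swap.aemeasurable
  refine Real.iSup_le (fun k => Real.iSup_le (fun l => ?_) (MICStar_nonneg μ))
    (MICStar_nonneg μ)
  have he : charMatrix (μ.map Prod.swap) (k : ℕ) (l : ℕ) = charMatrix μ (l : ℕ) (k : ℕ) := by
    unfold charMatrix
    rw [IStar_swap μ (le_of_lt k.2) (le_of_lt l.2), min_comm]
  rw [he]
  exact le_MICStar μ l.2 k.2

end MICAux
namespace MICAux

lemma filter_lt_subset_eq {T T' : Finset ℝ} {x y : ℝ} (hsub : T ⊆ T')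
    (h : T'.filter (· < x) = T'.filter (· < y)) :
    T.filter (· < x) = T.filter (· < y) := by
  ext b
  simp only [Finset.mem_filter]
  constructor
  · rintro ⟨hbT, hbx⟩
    have hb' : b ∈ T'.filter (· < x) := Finset.mem_filter.2 ⟨hsub hbT, hbx⟩
    rw [h] at hb'
    exact ⟨hbT, (Finset.mem_filter.1 hb').2⟩
  · rintro ⟨hbT, hby⟩
    have hb' : b ∈ T'.filter (· < y) := Finset.mem_filter.2 ⟨hsub hbT, hby⟩
    rw [← h] at hb'
    exact ⟨hbT, (Finset.mem_filter.1 hb').2⟩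

lemma exists_det {t : Set ℝ}
    (ht : t ∈ MeasureTheory.generateSetAlgebra (Set.range (Set.Iic : ℝ → Set ℝ))) :
    ∃ T : Finset ℝ, ∀ x y : ℝ, T.filter (· < x) = T.filter (· < y) → (x ∈ t ↔ y ∈ t) := by
  induction ht with
  | base s hs =>
    obtain ⟨a, rfl⟩ := hs
    refine ⟨{a}, fun x y h => ?_⟩
    have hax : a ∈ ({a} : Finset ℝ).filter (· < x) ↔ a < x := by simp
    have hay : a ∈ ({a} : Finset ℝ).filter (· < y) ↔ a < y := by simp
    have hiff : a < x ↔ a < y := by rw [← hax, h, hay]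
    simp only [Set.mem_Iic, ← not_lt]
    exact not_congr hiff
  | empty => exact ⟨∅, fun _ _ _ => Iff.rfl⟩
  | compl s _ ih =>
    obtain ⟨T, hT⟩ := ih
    refine ⟨T, fun x y h => ?_⟩
    simp only [Set.mem_compl_iff]
    exact not_congr (hT x y h)
  | union s u _ _ ihs ihu =>
    obtain ⟨T1, h1⟩ := ihs
    obtain ⟨T2, h2⟩ := ihu
    refine ⟨T1 ∪ T2, fun x y h => ?_⟩
    simp only [Set.mem_union]
    exact or_congr (h1 x y (filter_lt_subset_eq Finset.subset_union_left h))
      (h2 x y (filter_lt_subset_eq Finset.subset_union_right h))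

lemma abs_toReal_sub_le {α : Type*} [MeasurableSpace α] (μ : Measure α)
    [IsFiniteMeasure μ] (S S' : Set α) :
    |(μ S).toReal - (μ S').toReal| ≤ (μ (S ∆ S')).toReal := by
  have hsub : ∀ A B : Set α, A ⊆ B ∪ (A ∆ B) := by
    intro A B x hx
    by_cases hxB : x ∈ B
    · exact Or.inl hxB
    · exact Or.inr (Set.mem_symmDiff.2 (Or.inl ⟨hx, hxB⟩))
  have h1 : (μ S).toReal ≤ (μ S').toReal + (μ (S ∆ S')).toReal := by
    rw [← ENNReal.toReal_add (measure_ne_top μ _) (measure_ne_top μ _)]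
    exact ENNReal.toReal_mono (by finiteness)
      ((measure_mono (hsub S S')).trans (measure_union_le (μ := μ) _ _))
  have h2 : (μ S').toReal ≤ (μ S).toReal + (μ (S ∆ S')).toReal := by
    rw [← ENNReal.toReal_add (measure_ne_top μ _) (measure_ne_top μ _)]
    refine ENNReal.toReal_mono (by finiteness) ?_
    have := (measure_mono (hsub S' S)).trans (measure_union_le (μ := μ) _ _)
    rwa [symmDiff_comm] at this
  rw [abs_sub_le_iff]
  constructor <;> linarith

lemma approx_grid (μ : Measure (ℝ × ℝ)) [IsProbabilityMeasure μ] {k l : ℕ} {rowf colf : ℝ → ℕ}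
    (hrow : Monotone rowf) (hrk : ∀ t, rowf t < k) (hk : 1 < k)
    (hcol : Measurable colf) (hcl : ∀ t, colf t < l) {ε : ℝ} (hε : 0 < ε) :
    ∃ g : ℝ → ℕ, Measurable g ∧ (∀ x, g x < l) ∧
      (∀ j : ℕ, (μ ({z : ℝ × ℝ | g z.1 = j} ∆ {z | colf z.1 = j})).toReal ≤ l * ε) ∧
      gridMI μ k l rowf g ≤ MICStar μ * Real.log k := by
  have hl1 : 1 ≤ l := lt_of_le_of_lt (Nat.zero_le _) (hcl 0)
  set ν : Measure ℝ := μ.map Prod.fst with hν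
  haveI : IsProbabilityMeasure ν := Measure.isProbabilityMeasure_map measurable_fst.aemeasurable
  have hgen : (inferInstance : MeasurableSpace ℝ) =
      MeasurableSpace.generateFrom
        (MeasureTheory.generateSetAlgebra (Set.range (Set.Iic : ℝ → Set ℝ))) := by
    rw [MeasureTheory.generateFrom_generateSetAlgebra_eq]
    exact BorelSpace.measurable_eq.trans (borel_eq_generateFrom_Iic ℝ)
  have hdense : ν.MeasureDense (MeasureTheory.generateSetAlgebra (Set.range Set.Iic)) :=
    Measure.MeasureDense.of_generateFrom_isSetAlgebra_finite ν
      MeasureTheory.isSetAlgebra_generateSetAlgebra hgen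
  have hex : ∀ j : ℕ, ∃ s ∈ MeasureTheory.generateSetAlgebra (Set.range Set.Iic),
      ν ((colf ⁻¹' {j}) ∆ s) < ENNReal.ofReal ε :=
    fun j => hdense.approx _ (hcol (measurableSet_singleton j)) (measure_ne_top ν _) ε hε
  choose t ht hνt using hex
  choose T hT using fun j => exists_det (ht j)
  set Tall : Finset ℝ := (Finset.Ico 1 l).biUnion T with hTall
  set colf' : ℝ → ℕ := fun x => (Tall.filter (· < x)).card with hcolf'
  set g : ℝ → ℕ := fun x => sInf {j | (1 ≤ j ∧ j < l) ∧ x ∈ t j} with hgdef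
  have hg_ne : ∀ x, g x ≠ 0 → ((1 ≤ g x ∧ g x < l) ∧ x ∈ t (g x)) := by
    intro x hx
    have hne : {j | (1 ≤ j ∧ j < l) ∧ x ∈ t j}.Nonempty := by
      by_contra hemp
      rw [Set.not_nonempty_iff_eq_empty] at hemp
      exact hx (by simp [hgdef, hemp, Nat.sInf_empty])
    exact Nat.sInf_mem hne
  have hg_lt : ∀ x, g x < l := by
    intro x
    by_cases hx : g x = 0
    · rw [hx]; exact hl1
    · exact (hg_ne x hx).1.2
  have hg_zero : ∀ x, g x = 0 → ∀ j, 1 ≤ j → j < l → x ∉ t j := by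
    intro x hx j h1 h2 hmem
    have hmem' : g x ∈ {j | (1 ≤ j ∧ j < l) ∧ x ∈ t j} := Nat.sInf_mem ⟨j, ⟨h1, h2⟩, hmem⟩
    have := hmem'.1.1
    omega
  have hg_min : ∀ x j, 1 ≤ j → j < l → x ∈ t j → g x ≤ j :=
    fun x j h1 h2 hm => Nat.sInf_le ⟨⟨h1, h2⟩, hm⟩
  have htmeas : ∀ j, MeasurableSet (t j) := fun j => hdense.measurable _ (ht j)
  have hfib0 : g ⁻¹' {0} = ⋂ j ∈ Finset.Ico 1 l, (t j)ᶜ := by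
    ext x
    simp only [Set.mem_preimage, Set.mem_singleton_iff, Set.mem_iInter, Finset.mem_Ico,
      Set.mem_compl_iff]
    constructor
    · rintro h0 j ⟨hj1, hj2⟩
      exact hg_zero x h0 j hj1 hj2
    · intro hall
      have hempty : {j | (1 ≤ j ∧ j < l) ∧ x ∈ t j} = ∅ := by
        ext j
        simp only [Set.mem_setOf_eq, Set.mem_empty_iff_false, iff_false]
        rintro ⟨⟨h1, h2⟩, hm⟩
        exact hall j ⟨h1, h2⟩ hm
      simp [hgdef, hempty, Nat.sInf_empty]
  have hfibj : ∀ j, 1 ≤ j → j < l →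
      g ⁻¹' {j} = t j ∩ ⋂ j' ∈ Finset.Ico 1 j, (t j')ᶜ := by
    intro j hj1 hj2
    ext x
    simp only [Set.mem_preimage, Set.mem_singleton_iff, Set.mem_inter_iff, Set.mem_iInter,
      Finset.mem_Ico, Set.mem_compl_iff]
    constructor
    · intro hgx
      have hne := hg_ne x (by omega)
      rw [hgx] at hne
      refine ⟨hne.2, ?_⟩
      rintro j' ⟨h1', h2'⟩ hm'
      have := hg_min x j' h1' (by omega) hm'
      omega
    · rintro ⟨hmem, hmin⟩
      have hle : g x ≤ j := hg_min x j hj1 hj2 hmem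
      by_cases h0 : g x = 0
      · exact absurd hmem (hg_zero x h0 j hj1 hj2)
      · have hne := hg_ne x h0
        by_contra hne'
        have hlt : g x < j := lt_of_le_of_ne hle hne'
        exact hmin (g x) ⟨hne.1.1, hlt⟩ hne.2
  have hfib_big : ∀ j, l ≤ j → g ⁻¹' {j} = ∅ := by
    intro j hj
    ext x
    simp only [Set.mem_preimage, Set.mem_singleton_iff, Set.mem_empty_iff_false, iff_false]
    intro h
    exact absurd (h ▸ hg_lt x) (not_lt.2 hj)
  have hgmeas : Measurable g := by
    apply measurable_to_countable'
    intro j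
    rcases Nat.eq_zero_or_pos j with rfl | hj
    · rw [hfib0]
      exact Finset.measurableSet_biInter _ fun j' _ => (htmeas j').compl
    · by_cases hjl : j < l
      · rw [hfibj j hj hjl]
        exact (htmeas j).inter (Finset.measurableSet_biInter _ fun j' _ => (htmeas j').compl)
      · rw [hfib_big j (not_lt.1 hjl)]
        exact MeasurableSet.empty
  have hdet : ∀ x y : ℝ, colf' x = colf' y → g x = g y := by
    intro x y hxy
    have hfeq : Tall.filter (· < x) = Tall.filter (· < y) := by
      rcases le_total x y with hle | hle
      · refine Finset.eq_of_subset_of_card_le ?_ (le_of_eq hxy.symm)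
        intro b hb
        rw [Finset.mem_filter] at hb ⊢
        exact ⟨hb.1, lt_of_lt_of_le hb.2 hle⟩
      · refine (Finset.eq_of_subset_of_card_le ?_ (le_of_eq hxy)).symm
        intro b hb
        rw [Finset.mem_filter] at hb ⊢
        exact ⟨hb.1, lt_of_lt_of_le hb.2 hle⟩
    have hmemiff : ∀ j, 1 ≤ j → j < l → (x ∈ t j ↔ y ∈ t j) := by
      intro j h1 h2
      refine hT j x y (filter_lt_subset_eq ?_ hfeq)
      intro b hb
      exact Finset.mem_biUnion.2 ⟨j, Finset.mem_Ico.2 ⟨h1, h2⟩, hb⟩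
    have hseteq : {j | (1 ≤ j ∧ j < l) ∧ x ∈ t j} = {j | (1 ≤ j ∧ j < l) ∧ y ∈ t j} := by
      ext j
      simp only [Set.mem_setOf_eq]
      constructor
      · rintro ⟨⟨h1, h2⟩, hm⟩
        exact ⟨⟨h1, h2⟩, (hmemiff j h1 h2).mp hm⟩
      · rintro ⟨⟨h1, h2⟩, hm⟩
        exact ⟨⟨h1, h2⟩, (hmemiff j h1 h2).mpr hm⟩
    simp only [hgdef, hseteq]
  classical
  set σ : ℕ → ℕ := fun n => if h : ∃ x, colf' x = n then g h.choose else 0 with hσdef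
  have hσg : ∀ x, σ (colf' x) = g x := by
    intro x
    have hex' : ∃ y, colf' y = colf' x := ⟨x, rfl⟩
    simp only [hσdef, dif_pos hex']
    exact hdet _ x hex'.choose_spec
  have hσlt : ∀ n, σ n < l := by
    intro n
    simp only [hσdef]
    split
    · exact hg_lt _
    · exact hl1
  have hmono : Monotone colf' := by
    intro x y hxy
    apply Finset.card_le_card
    intro b hb
    rw [Finset.mem_filter] at hb ⊢
    exact ⟨hb.1, lt_of_lt_of_le hb.2 hxy⟩
  have hcolf'_lt : ∀ x, colf' x < Tall.card + 1 := fun x =>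
    Nat.lt_succ_of_le (Finset.card_filter_le _ _)
  have hsd : ∀ j : ℕ, (μ ({z : ℝ × ℝ | g z.1 = j} ∆ {z | colf z.1 = j})).toReal ≤ l * ε := by
    intro j
    have hmeasU : MeasurableSet (⋃ j' ∈ Finset.Ico 1 l, ((colf ⁻¹' {j'}) ∆ t j')) :=
      Finset.measurableSet_biUnion _ fun j' _ =>
        (hcol (measurableSet_singleton j')).symmDiff (htmeas j')
    have hsub : {z : ℝ × ℝ | g z.1 = j} ∆ {z | colf z.1 = j} ⊆
        Prod.fst ⁻¹' (⋃ j' ∈ Finset.Ico 1 l, ((colf ⁻¹' {j'}) ∆ t j')) := by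
      intro z hz
      rw [Set.mem_symmDiff] at hz
      simp only [Set.mem_preimage, Set.mem_iUnion, Finset.mem_Ico]
      rcases hz with ⟨hgz, hcz⟩ | ⟨hcz, hgz⟩
      · simp only [Set.mem_setOf_eq] at hgz hcz
        by_cases h0 : g z.1 = 0
        · have hj0 : j = 0 := by omega
          have hj2 : 1 ≤ colf z.1 := by omega
          refine ⟨colf z.1, ⟨hj2, hcl z.1⟩, Set.mem_symmDiff.2 (Or.inl ⟨rfl, ?_⟩)⟩
          exact hg_zero z.1 h0 _ hj2 (hcl z.1)
        · have hne := hg_ne z.1 h0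
          refine ⟨j, ⟨by omega, by omega⟩, Set.mem_symmDiff.2 (Or.inr ⟨?_, ?_⟩)⟩
          · rw [← hgz]; exact hne.2
          · simp only [Set.mem_preimage, Set.mem_singleton_iff]
            exact hcz
      · simp only [Set.mem_setOf_eq] at hgz hcz
        by_cases h0 : g z.1 = 0
        · have hj1 : 1 ≤ j := by omega
          have hjl : j < l := by rw [← hcz]; exact hcl z.1
          refine ⟨j, ⟨hj1, hjl⟩, Set.mem_symmDiff.2 (Or.inl ⟨?_, ?_⟩)⟩
          · simp only [Set.mem_preimage, Set.mem_singleton_iff]; exact hcz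
          · exact hg_zero z.1 h0 j hj1 hjl
        · have hne := hg_ne z.1 h0
          refine ⟨g z.1, ⟨hne.1.1, hne.1.2⟩, Set.mem_symmDiff.2 (Or.inr ⟨hne.2, ?_⟩)⟩
          simp only [Set.mem_preimage, Set.mem_singleton_iff]
          intro hc
          exact hgz (by rw [hcz] at hc; exact hc.symm)
    have hb1 : μ ({z : ℝ × ℝ | g z.1 = j} ∆ {z | colf z.1 = j}) ≤
        ν (⋃ j' ∈ Finset.Ico 1 l, ((colf ⁻¹' {j'}) ∆ t j')) := by
      rw [hν, Measure.map_apply measurable_fst hmeasU]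
      exact measure_mono hsub
    have hb2 : ν (⋃ j' ∈ Finset.Ico 1 l, ((colf ⁻¹' {j'}) ∆ t j')) ≤
        ((l : ℝ≥0∞)) * ENNReal.ofReal ε := by
      calc ν (⋃ j' ∈ Finset.Ico 1 l, ((colf ⁻¹' {j'}) ∆ t j'))
          ≤ ∑ j' ∈ Finset.Ico 1 l, ν ((colf ⁻¹' {j'}) ∆ t j') :=
            measure_biUnion_finset_le _ _
        _ ≤ ∑ _j' ∈ Finset.Ico 1 l, ENNReal.ofReal ε :=
            Finset.sum_le_sum fun j' _ => (hνt j').le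
        _ = ((Finset.Ico 1 l).card : ℝ≥0∞) * ENNReal.ofReal ε := by
            rw [Finset.sum_const, nsmul_eq_mul]
        _ ≤ ((l : ℝ≥0∞)) * ENNReal.ofReal ε := by
            apply mul_le_mul_left
            rw [Nat.card_Ico]
            exact_mod_cast Nat.sub_le l 1
    have := hb1.trans hb2
    calc (μ ({z : ℝ × ℝ | g z.1 = j} ∆ {z | colf z.1 = j})).toReal
        ≤ (((l : ℝ≥0∞)) * ENNReal.ofReal ε).toReal :=
          ENNReal.toReal_mono (by finiteness) this
      _ = l * ε := by
          rw [ENNReal.toReal_mul, ENNReal.toReal_ofReal hε.le]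
          simp
  have hrowm : Measurable rowf := hrow.measurable
  set m : ℕ := Tall.card + 1 with hm
  set L : ℕ := max m k with hLdef
  have hgsig : gridMI μ k l rowf g = gridMI μ k l rowf (fun x => σ (colf' x)) := by
    congr 1
    funext x
    exact (hσg x).symm
  have h2 : gridMI μ k l rowf (fun x => σ (colf' x)) ≤ gridMI μ k m rowf colf' :=
    gridMI_merge μ hrowm hrk hmono.measurable hcolf'_lt σ hσlt
  have h3 : gridMI μ k m rowf colf' = gridMI μ k L rowf colf' :=
    (gridMI_pad μ hcolf'_lt (le_max_left _ _)).symm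
  have h4 : gridMI μ k L rowf colf' ≤ IStar μ k L := by
    rw [IStar]
    exact le_ciSup (IStar_bddAbove μ k L) ⟨(rowf, colf'), ⟨hrow, hrk⟩,
      ⟨hmono, fun x => lt_of_lt_of_le (hcolf'_lt x) (le_max_left _ _)⟩⟩
  have hLk : 1 < L := lt_of_lt_of_le hk (le_max_right m k)
  have h5 : IStar μ k L ≤ MICStar μ * Real.log k := by
    have hmin : min (k : ℝ) (L : ℝ) = (k : ℝ) := min_eq_left (by exact_mod_cast le_max_right m k)
    have hlogk : (0:ℝ) < Real.log k := Real.log_pos (by exact_mod_cast hk)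
    have hIeq : IStar μ k L = charMatrix μ k L * Real.log k := by
      rw [charMatrix, hmin, div_mul_cancel₀ _ hlogk.ne']
    rw [hIeq]
    exact mul_le_mul_of_nonneg_right (le_MICStar μ hk hLk) hlogk.le
  refine ⟨g, hgmeas, hg_lt, hsd, ?_⟩
  rw [hgsig]
  calc gridMI μ k l rowf (fun x => σ (colf' x)) ≤ gridMI μ k m rowf colf' := h2
    _ = gridMI μ k L rowf colf' := h3
    _ ≤ IStar μ k L := h4
    _ ≤ MICStar μ * Real.log k := h5

lemma mixedY_le_MICStar (μ : Measure (ℝ × ℝ)) [IsProbabilityMeasure μ] {k : ℕ} {rowf : ℝ → ℕ}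
    (hk : 1 < k) (hP : IsIntervalPart k rowf) :
    mixedMI_Y μ k rowf ≤ MICStar μ * Real.log k := by
  have hlogk : (0:ℝ) ≤ Real.log k := Real.log_nonneg (by exact_mod_cast hk.le)
  refine Real.iSup_le ?_ (mul_nonneg (MICStar_nonneg μ) hlogk)
  rintro ⟨⟨l, colf⟩, hcm, hcl⟩
  have hseq : ∀ n : ℕ, ∃ g : ℝ → ℕ, Measurable g ∧ (∀ x, g x < l) ∧
      (∀ j : ℕ, (μ ({z : ℝ × ℝ | g z.1 = j} ∆ {z | colf z.1 = j})).toReal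
        ≤ l * (1 / (n + 1))) ∧
      gridMI μ k l rowf g ≤ MICStar μ * Real.log k :=
    fun n => approx_grid μ hP.1 hP.2 hk hcm hcl (by positivity)
  choose g hgm hgl hgsd hgb using hseq
  have hbnd : Filter.Tendsto (fun n : ℕ => (l : ℝ) * (1 / (n + 1))) Filter.atTop (nhds 0) := by
    have h := tendsto_one_div_add_atTop_nhds_zero_nat (𝕜 := ℝ)
    simpa using h.const_mul (l : ℝ)
  have haux : ∀ (F : ℕ → Set (ℝ × ℝ)) (S : Set (ℝ × ℝ)),
      (∀ n, (μ (F n ∆ S)).toReal ≤ (l : ℝ) * (1 / (n + 1))) →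
      Filter.Tendsto (fun n => (μ (F n)).toReal) Filter.atTop (nhds ((μ S).toReal)) := by
    intro F S h
    rw [← tendsto_sub_nhds_zero_iff]
    refine squeeze_zero_norm (fun n => ?_) hbnd
    rw [Real.norm_eq_abs]
    exact (abs_toReal_sub_le μ (F n) S).trans (h n)
  have hcolT : ∀ j, Filter.Tendsto (fun n => (μ {z : ℝ × ℝ | g n z.1 = j}).toReal)
      Filter.atTop (nhds ((μ {z : ℝ × ℝ | colf z.1 = j}).toReal)) :=
    fun j => haux _ _ (fun n => hgsd n j)
  have hjointT : ∀ i j,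
      Filter.Tendsto (fun n => (μ {z : ℝ × ℝ | rowf z.2 = i ∧ g n z.1 = j}).toReal)
        Filter.atTop (nhds ((μ {z : ℝ × ℝ | rowf z.2 = i ∧ colf z.1 = j}).toReal)) := by
    intro i j
    apply haux
    intro n
    refine le_trans ?_ (hgsd n j)
    refine ENNReal.toReal_mono (measure_ne_top μ _) (measure_mono ?_)
    intro z hz
    rw [Set.mem_symmDiff] at hz ⊢
    rcases hz with ⟨⟨hr, hg1⟩, hn2⟩ | ⟨⟨hr, hc1⟩, hn2⟩
    · exact Or.inl ⟨hg1, fun hc => hn2 ⟨hr, hc⟩⟩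
    · exact Or.inr ⟨hc1, fun hgj => hn2 ⟨hr, hgj⟩⟩
  have htend : Filter.Tendsto (fun n => gridMI μ k l rowf (g n)) Filter.atTop
      (nhds (gridMI μ k l rowf colf)) := by
    unfold gridMI
    refine Filter.Tendsto.sub (Filter.Tendsto.add tendsto_const_nhds ?_) ?_
    · exact tendsto_finset_sum _ fun j _ =>
        (Real.continuous_negMulLog.tendsto _).comp (hcolT j)
    · exact tendsto_finset_sum _ fun i _ => tendsto_finset_sum _ fun j _ =>
        (Real.continuous_negMulLog.tendsto _).comp (hjointT i j)
  exact le_of_tendsto htend (Filter.Eventually.of_forall hgb)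

end MICAux
/-- `MIC*(X,Y)` equals the supremum over all finite interval partitions `P` of
`max (I(X, Y|_P)/log|P|) (I(X|_P, Y)/log|P|)`. -/
theorem stmt12 (μ : Measure (ℝ × ℝ)) [IsProbabilityMeasure μ]
    (hsupp : μ ((Set.Icc (0 : ℝ) 1 ×ˢ Set.Icc (0 : ℝ) 1)ᶜ) = 0) :
    MICStar μ = ⨆ P : {q : ℕ × (ℝ → ℕ) // IsIntervalPart q.1 q.2},
      max (mixedMI_Y μ P.1.1 P.1.2 / Real.log P.1.1)
          (mixedMI_X μ P.1.1 P.1.2 / Real.log P.1.1) := by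
  classical
  open MICAux in
  set RHSf : {q : ℕ × (ℝ → ℕ) // IsIntervalPart q.1 q.2} → ℝ := fun P =>
    max (mixedMI_Y μ P.1.1 P.1.2 / Real.log P.1.1)
        (mixedMI_X μ P.1.1 P.1.2 / Real.log P.1.1) with hRHSf
  have hterm_le_one : ∀ P, RHSf P ≤ 1 := by
    rintro ⟨⟨k, rowf⟩, hP⟩
    show max (mixedMI_Y μ k rowf / Real.log k) (mixedMI_X μ k rowf / Real.log k) ≤ 1
    have hk1 : 1 ≤ k := lt_of_le_of_lt (Nat.zero_le _) (hP.2 0)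
    by_cases hk : 1 < k
    · have hlog : 0 < Real.log k := Real.log_pos (by exact_mod_cast hk)
      apply max_le
      · rw [div_le_one hlog]
        exact MICAux.mixedY_le_log μ hP.1.measurable hP.2
      · rw [div_le_one hlog]
        exact MICAux.mixedX_le_log μ hP.1.measurable hP.2
    · have hkeq : k = 1 := le_antisymm (not_lt.1 hk) hk1
      rw [hkeq]
      simp [Real.log_one]
  have hbdd : BddAbove (Set.range RHSf) := by
    refine ⟨1, ?_⟩
    rintro x ⟨P, rfl⟩
    exact hterm_le_one P
  have hP0 : IsIntervalPart 2 (fun _ : ℝ => 0) := ⟨monotone_const, fun _ => Nat.zero_lt_two⟩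
  have hRHS0 : 0 ≤ ⨆ P, RHSf P := by
    refine le_ciSup_of_le hbdd ⟨(2, fun _ => 0), hP0⟩ ?_
    refine le_max_of_le_left (div_nonneg ?_ (Real.log_nonneg (by norm_num)))
    exact MICAux.mixedY_nonneg μ measurable_const (fun _ => Nat.zero_lt_two)
  apply le_antisymm
  · rw [MICStar]
    refine Real.iSup_le (fun kk => Real.iSup_le (fun ll => ?_) hRHS0) hRHS0
    obtain ⟨k, hk⟩ := kk
    obtain ⟨l, hl⟩ := ll
    rcases le_total k l with hkl | hkl
    · have hmin : min (k : ℝ) (l : ℝ) = (k : ℝ) := min_eq_left (by exact_mod_cast hkl)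
      have hlog : 0 < Real.log k := Real.log_pos (by exact_mod_cast hk)
      show IStar μ k l / Real.log (min (k : ℝ) (l : ℝ)) ≤ _
      rw [hmin, div_le_iff₀ hlog, IStar]
      refine Real.iSup_le ?_ (mul_nonneg hRHS0 hlog.le)
      rintro ⟨⟨rowf, colf⟩, hr, hc⟩
      have step1 : gridMI μ k l rowf colf ≤ mixedMI_Y μ k rowf :=
        le_ciSup (MICAux.mixedY_bddAbove μ hr.1.measurable hr.2)
          ⟨(l, colf), hc.1.measurable, hc.2⟩
      have hmax : max (mixedMI_Y μ k rowf / Real.log k) (mixedMI_X μ k rowf / Real.log k)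
          ≤ ⨆ P, RHSf P := le_ciSup hbdd ⟨(k, rowf), hr⟩
      have step2 : mixedMI_Y μ k rowf ≤ (⨆ P, RHSf P) * Real.log k := by
        have h' : mixedMI_Y μ k rowf / Real.log k ≤ ⨆ P, RHSf P :=
          le_trans (le_max_left _ _) hmax
        calc mixedMI_Y μ k rowf = (mixedMI_Y μ k rowf / Real.log k) * Real.log k := by
              rw [div_mul_cancel₀ _ hlog.ne']
          _ ≤ _ := mul_le_mul_of_nonneg_right h' hlog.le
      exact step1.trans step2
    · have hmin : min (k : ℝ) (l : ℝ) = (l : ℝ) := min_eq_right (by exact_mod_cast hkl)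
      have hlog : 0 < Real.log l := Real.log_pos (by exact_mod_cast hl)
      show IStar μ k l / Real.log (min (k : ℝ) (l : ℝ)) ≤ _
      rw [hmin, div_le_iff₀ hlog, IStar]
      refine Real.iSup_le ?_ (mul_nonneg hRHS0 hlog.le)
      rintro ⟨⟨rowf, colf⟩, hr, hc⟩
      have step1 : gridMI μ k l rowf colf ≤ mixedMI_X μ l colf :=
        le_ciSup (MICAux.mixedX_bddAbove μ hc.1.measurable hc.2)
          ⟨(k, rowf), hr.1.measurable, hr.2⟩
      have hmax : max (mixedMI_Y μ l colf / Real.log l) (mixedMI_X μ l colf / Real.log l)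
          ≤ ⨆ P, RHSf P := le_ciSup hbdd ⟨(l, colf), hc⟩
      have step2 : mixedMI_X μ l colf ≤ (⨆ P, RHSf P) * Real.log l := by
        have h' : mixedMI_X μ l colf / Real.log l ≤ ⨆ P, RHSf P :=
          le_trans (le_max_right _ _) hmax
        calc mixedMI_X μ l colf = (mixedMI_X μ l colf / Real.log l) * Real.log l := by
              rw [div_mul_cancel₀ _ hlog.ne']
          _ ≤ _ := mul_le_mul_of_nonneg_right h' hlog.le
      exact step1.trans step2
  · refine Real.iSup_le ?_ (MICAux.MICStar_nonneg μ)
    rintro ⟨⟨k, rowf⟩, hP⟩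
    show max (mixedMI_Y μ k rowf / Real.log k) (mixedMI_X μ k rowf / Real.log k) ≤ MICStar μ
    have hk1 : 1 ≤ k := lt_of_le_of_lt (Nat.zero_le _) (hP.2 0)
    by_cases hk : 1 < k
    · have hlog : 0 < Real.log k := Real.log_pos (by exact_mod_cast hk)
      apply max_le
      · rw [div_le_iff₀ hlog]
        exact MICAux.mixedY_le_MICStar μ hk hP
      · rw [div_le_iff₀ hlog]
        haveI : IsProbabilityMeasure (μ.map Prod.swap) :=
          Measure.isProbabilityMeasure_map measurable_swap.aemeasurable
        calc mixedMI_X μ k rowf = mixedMI_Y (μ.map Prod.swap) k rowf :=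
              MICAux.mixedX_eq_swap μ hP.1.measurable
          _ ≤ MICStar (μ.map Prod.swap) * Real.log k :=
              MICAux.mixedY_le_MICStar _ hk hP
          _ ≤ MICStar μ * Real.log k :=
              mul_le_mul_of_nonneg_right (MICAux.MICStar_swap_le μ) hlog.le
    · have hkeq : k = 1 := le_antisymm (not_lt.1 hk) hk1
      rw [hkeq]
      simp only [Nat.cast_one, Real.log_one, div_zero, max_self]
      exact MICAux.MICStar_nonneg μ
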